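/- Let I be a bounded interval and V ∈ L^∞(I, ℝ) be non-constant (as an a.e. equivalence class). Let e₁ be the first L²-normalized Dirichlet (or periodic) Laplace eigenfunction on I, which is positive in the interior of I. Then there exists a Lipschitz function φ on I with |φ| ≤ 1, with ‖φ'‖_∞ ≤ 2π/|I|, with ∫_I φ e₁² = 0, with φ e₁ vanishing at the endpoints, and with ∫_I V φ e₁² > 0. In particular ω₂(V) := max{∫_I V φ e₁² : φ ∈ L, ‖φ‖_L ≤ 1} > 0. -/

import Mathlib

open MeasureTheory
open scoped Real ContDiff

/-- First normalized Dirichlet eigenfunction of the Laplacian on `[a,b]`. -/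
noncomputable def firstEigenfunction (a b x : ℝ) : ℝ :=
  Real.sqrt (2 / (b - a)) * Real.sin (π * (x - a) / (b - a))

section Aux

variable {a b : ℝ}

lemma firstEigenfunction_continuous : Continuous (firstEigenfunction a b) := by
  unfold firstEigenfunction
  fun_prop

lemma firstEigenfunction_pos (hab : a < b) {x : ℝ} (hx : x ∈ Set.Ioo a b) :
    0 < firstEigenfunction a b x := by
  have hba : 0 < b - a := sub_pos.mpr hab
  have h1 : 0 < Real.sqrt (2 / (b - a)) :=
    Real.sqrt_pos.mpr (by positivity)
  have h2 : 0 < Real.sin (π * (x - a) / (b - a)) := by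
    apply Real.sin_pos_of_pos_of_lt_pi
    · have : 0 < x - a := sub_pos.mpr hx.1
      positivity
    · rw [div_lt_iff₀ hba]
      have : x - a < b - a := by have := hx.2; linarith
      nlinarith [Real.pi_pos]
  exact mul_pos h1 h2

lemma intervalIntegrable_bdd_mul_cont {f g : ℝ → ℝ} (hf : Measurable f)
    {M : ℝ} (hM : ∀ x, |f x| ≤ M) (hg : Continuous g) :
    IntervalIntegrable (fun x => f x * g x) volume a b := by
  obtain ⟨B, hB⟩ := isCompact_uIcc.exists_bound_of_continuousOn hg.continuousOn
  have hMnn : 0 ≤ M := le_trans (abs_nonneg _) (hM a)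
  apply IntervalIntegrable.mono_fun' (g := fun _ => M * B)
  · exact intervalIntegrable_const
  · exact ((hf.mul hg.measurable).aestronglyMeasurable).restrict
  · refine (ae_restrict_iff' measurableSet_uIoc).mpr (ae_of_all _ fun x hx => ?_)
    have hx' : x ∈ Set.uIcc a b := Set.uIoc_subset_uIcc hx
    show ‖f x * g x‖ ≤ M * B
    rw [Real.norm_eq_abs, abs_mul]
    exact mul_le_mul (hM x) ((Real.norm_eq_abs _ ▸ hB x hx')) (abs_nonneg _) hMnn

end Aux

theorem exists_test_function_omega2_pos
    (a b : ℝ) (hab : a < b) (V : ℝ → ℝ)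
    (hVmeas : Measurable V) (hVbd : ∃ M : ℝ, ∀ x, |V x| ≤ M)
    (hVnc : ∀ c : ℝ, ¬ (V =ᵐ[volume.restrict (Set.Icc a b)] fun _ => c)) :
    ∃ φ : ℝ → ℝ,
      LipschitzOnWith (Real.toNNReal (2 * π / (b - a))) φ (Set.Icc a b) ∧
      (∀ x ∈ Set.Icc a b, |φ x| ≤ 1) ∧
      (∫ x in a..b, φ x * (firstEigenfunction a b x) ^ 2) = 0 ∧
      φ a * firstEigenfunction a b a = φ b * firstEigenfunction a b b ∧
      0 < ∫ x in a..b, V x * φ x * (firstEigenfunction a b x) ^ 2 := by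
  obtain ⟨M, hM⟩ := hVbd
  set w : ℝ → ℝ := fun x => (firstEigenfunction a b x) ^ 2 with hw
  have hwcont : Continuous w := (firstEigenfunction_continuous).pow 2
  have hba : 0 < b - a := sub_pos.mpr hab
  have he1a : firstEigenfunction a b a = 0 := by
    simp [firstEigenfunction]
  have he1b : firstEigenfunction a b b = 0 := by
    have h : π * (b - a) / (b - a) = π := by field_simp
    simp [firstEigenfunction, h]
  have hIw : 0 < ∫ x in a..b, w x := by
    apply intervalIntegral.integral_pos hab hwcont.continuousOn
    · intro x _; positivity
    · refine ⟨(a + b) / 2, ⟨by linarith, by linarith⟩, ?_⟩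
      have := firstEigenfunction_pos hab (x := (a + b) / 2) ⟨by linarith, by linarith⟩
      positivity
  set Iw : ℝ := ∫ x in a..b, w x with hIwdef
  set c : ℝ := (∫ x in a..b, V x * w x) / Iw with hc
  have hVw : IntervalIntegrable (fun x => V x * w x) volume a b :=
    intervalIntegrable_bdd_mul_cont hVmeas hM hwcont
  -- Step 1: get a Lipschitz ψ with ∫ ψ w = 0 and ∫ V ψ w ≠ 0
  have key : ∃ ψ : ℝ → ℝ, (∃ C : NNReal, LipschitzWith C ψ) ∧ Continuous ψ ∧
      (∫ x in a..b, ψ x * w x) = 0 ∧ (∫ x in a..b, V x * ψ x * w x) ≠ 0 := by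
    by_contra hcon
    push_neg at hcon
    have hforall : ∀ g : ℝ → ℝ, ContDiff ℝ ∞ g → HasCompactSupport g →
        (∫ x in a..b, (V x - c) * g x * w x) = 0 := by
      intro g hg hgsupp
      obtain ⟨Cg, hCg⟩ := hg.lipschitzWith_of_hasCompactSupport hgsupp (by norm_num)
      set d : ℝ := (∫ x in a..b, g x * w x) / Iw with hd
      set ψ : ℝ → ℝ := fun x => g x - d with hψ
      have hψcont : Continuous ψ := (hg.continuous).sub continuous_const
      have hψlip : ∃ C : NNReal, LipschitzWith C ψ :=
        ⟨Cg + 0, hCg.sub (LipschitzWith.const d)⟩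
      have hgw : IntervalIntegrable (fun x => g x * w x) volume a b :=
        ((hg.continuous).mul hwcont).intervalIntegrable a b
      have hdw : IntervalIntegrable (fun x => d * w x) volume a b :=
        (continuous_const.mul hwcont).intervalIntegrable a b
      have hψ0 : (∫ x in a..b, ψ x * w x) = 0 := by
        have h1 : (∫ x in a..b, ψ x * w x)
            = ∫ x in a..b, (g x * w x - d * w x) := by
          apply intervalIntegral.integral_congr
          intro x _; show ψ x * w x = _; rw [hψ]; ring
        rw [h1, intervalIntegral.integral_sub hgw hdw,
          intervalIntegral.integral_const_mul, hd]
        field_simp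
        rw [← hIwdef]; ring
      have hVψ0 := hcon ψ hψlip hψcont hψ0
      have hVgw : IntervalIntegrable (fun x => V x * g x * w x) volume a b := by
        have := intervalIntegrable_bdd_mul_cont (a := a) (b := b) hVmeas hM
          ((hg.continuous).mul hwcont)
        simpa [mul_assoc] using this
      have hVdw : IntervalIntegrable (fun x => d * (V x * w x)) volume a b :=
        hVw.const_mul d
      have hexp : (∫ x in a..b, V x * ψ x * w x)
          = (∫ x in a..b, V x * g x * w x) - d * ∫ x in a..b, V x * w x := by
        have h1 : (∫ x in a..b, V x * ψ x * w x)
            = ∫ x in a..b, (V x * g x * w x - d * (V x * w x)) := by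
          apply intervalIntegral.integral_congr
          intro x _; show V x * ψ x * w x = _; rw [hψ]; ring
        rw [h1, intervalIntegral.integral_sub hVgw hVdw,
          intervalIntegral.integral_const_mul]
      have hVgw_eq : (∫ x in a..b, V x * g x * w x) = d * ∫ x in a..b, V x * w x := by
        have := hexp.symm.trans hVψ0
        linarith [this]
      have hexp2 : (∫ x in a..b, (V x - c) * g x * w x)
          = (∫ x in a..b, V x * g x * w x) - c * ∫ x in a..b, g x * w x := by
        have h1 : (∫ x in a..b, (V x - c) * g x * w x)
            = ∫ x in a..b, (V x * g x * w x - c * (g x * w x)) := by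
          apply intervalIntegral.integral_congr
          intro x _; ring
        rw [h1, intervalIntegral.integral_sub hVgw (hgw.const_mul c),
          intervalIntegral.integral_const_mul]
      rw [hexp2, hVgw_eq, hd, hc]
      have hIw0 : Iw ≠ 0 := ne_of_gt hIw
      field_simp
      ring
    -- conclude V = c a.e. on [a,b], contradiction
    set f : ℝ → ℝ := fun x => (V x - c) * w x with hf
    have hfmeas : Measurable f := (hVmeas.sub measurable_const).mul hwcont.measurable
    have hfII : IntervalIntegrable f volume a b := by
      have : ∀ x, |V x - c| ≤ M + |c| := fun x => by
        have := hM x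
        have h1 : |V x - c| ≤ |V x| + |c| := abs_sub _ _
        linarith
      exact intervalIntegrable_bdd_mul_cont (hVmeas.sub measurable_const) this hwcont
    have hfint : IntegrableOn f (Set.Ioc a b) volume := hfII.1
    have hfloc : LocallyIntegrable f (volume.restrict (Set.Ioc a b)) :=
      hfint.locallyIntegrable
    have hae : ∀ᵐ x ∂(volume.restrict (Set.Ioc a b)), f x = 0 := by
      apply ae_eq_zero_of_integral_contDiff_smul_eq_zero hfloc
      intro g hg hgsupp
      have := hforall g hg hgsupp
      rw [intervalIntegral.integral_of_le hab.le] at this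
      rw [← this]
      apply setIntegral_congr_fun measurableSet_Ioc
      intro x _
      show g x • f x = _
      rw [hf, smul_eq_mul]; ring
    have hres : volume.restrict (Set.Ioc a b) = volume.restrict (Set.Ioo a b) :=
      (Measure.restrict_congr_set Ioo_ae_eq_Ioc).symm
    rw [hres] at hae
    have haeV : V =ᵐ[volume.restrict (Set.Ioo a b)] fun _ => c := by
      filter_upwards [hae, ae_restrict_mem measurableSet_Ioo] with x hx hxmem
      have hwpos : 0 < w x := by
        have := firstEigenfunction_pos hab hxmem
        positivity
      have : V x - c = 0 := by
        rcases mul_eq_zero.mp hx with h | h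
        · exact h
        · exact absurd h (ne_of_gt hwpos)
      linarith [this]
    have hres2 : volume.restrict (Set.Ioo a b) = volume.restrict (Set.Icc a b) :=
      Measure.restrict_congr_set Ioo_ae_eq_Icc
    rw [hres2] at haeV
    exact hVnc c haeV
  -- Step 2: rescale
  obtain ⟨ψ, ⟨C, hC⟩, hψcont, hψ0, hψne⟩ := key
  obtain ⟨B, hB⟩ := isCompact_Icc.exists_bound_of_continuousOn
    (hψcont.continuousOn (s := Set.Icc a b))
  have hBnn : 0 ≤ B := le_trans (norm_nonneg _) (hB a ⟨le_refl a, hab.le⟩)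
  set J : ℝ := ∫ x in a..b, V x * ψ x * w x with hJ
  set K : ℝ := 2 * π / (b - a) with hK
  have hKpos : 0 < K := by
    have := Real.pi_pos
    positivity
  set s : ℝ := if 0 < J then 1 else -1 with hs
  have hsJ : 0 < s * J := by
    rcases lt_trichotomy 0 J with h | h | h
    · rw [hs, if_pos h]; linarith
    · exact absurd h.symm hψne
    · rw [hs, if_neg (by linarith)]; nlinarith
  have hsabs : |s| = 1 := by
    rcases ite_eq_or_eq (0 < J) (1:ℝ) (-1) with h | h <;> rw [hs, h] <;> norm_num
  set ε : ℝ := min (1 / (B + 1)) (K / (C + 1)) with hε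
  have hεpos : 0 < ε := by
    apply lt_min
    · positivity
    · have : (0:ℝ) < C + 1 := by positivity
      positivity
  refine ⟨fun x => (s * ε) * ψ x, ?_, ?_, ?_, ?_, ?_⟩
  · -- Lipschitz
    rw [lipschitzOnWith_iff_dist_le_mul]
    intro x _ y _
    have hco : (Real.toNNReal K : ℝ) = K := Real.coe_toNNReal _ hKpos.le
    rw [hco]
    have h1 : dist ((s * ε) * ψ x) ((s * ε) * ψ y) = |s * ε| * dist (ψ x) (ψ y) := by
      rw [Real.dist_eq, Real.dist_eq, ← abs_mul]; ring_nf
    rw [h1, abs_mul, hsabs, one_mul, abs_of_pos hεpos]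
    have h2 : dist (ψ x) (ψ y) ≤ C * dist x y := hC.dist_le_mul x y
    have h3 : ε * dist (ψ x) (ψ y) ≤ ε * (C * dist x y) := by
      apply mul_le_mul_of_nonneg_left h2 hεpos.le
    refine h3.trans ?_
    have h4 : ε * (C:ℝ) ≤ K := by
      have h5 : ε ≤ K / (C + 1) := min_le_right _ _
      have h6 : (0:ℝ) ≤ C := C.coe_nonneg
      have : ε * (C:ℝ) ≤ (K / (C + 1)) * C :=
        mul_le_mul_of_nonneg_right h5 h6
      refine this.trans ?_
      rw [div_mul_eq_mul_div, div_le_iff₀ (by positivity)]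
      nlinarith
    nlinarith [dist_nonneg (x := x) (y := y), h4, hεpos.le]
  · -- bound
    intro x hx
    rw [abs_mul, abs_mul, hsabs, one_mul, abs_of_pos hεpos]
    have h1 : |ψ x| ≤ B := (Real.norm_eq_abs _) ▸ hB x hx
    have h2 : ε ≤ 1 / (B + 1) := min_le_left _ _
    have : ε * |ψ x| ≤ (1 / (B + 1)) * B := by
      apply mul_le_mul h2 h1 (abs_nonneg _) (by positivity)
    refine this.trans ?_
    rw [div_mul_eq_mul_div, div_le_iff₀ (by positivity)]
    nlinarith
  · -- zero integral
    have h1 : (∫ x in a..b, (s * ε) * ψ x * w x)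
        = (s * ε) * ∫ x in a..b, ψ x * w x := by
      rw [← intervalIntegral.integral_const_mul]
      apply intervalIntegral.integral_congr
      intro x _; ring
    rw [h1, hψ0, mul_zero]
  · -- boundary
    rw [he1a, he1b, mul_zero, mul_zero]
  · -- positivity
    have h1 : (∫ x in a..b, V x * ((s * ε) * ψ x) * w x)
        = (s * ε) * ∫ x in a..b, V x * ψ x * w x := by
      rw [← intervalIntegral.integral_const_mul]
      apply intervalIntegral.integral_congr
      intro x _; ring
    rw [h1]
    nlinarith [hsJ, hεpos]
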